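/- arXiv:2206.10514 — 2 statements merged into one kernel-verified Lean document; each statement's English description precedes it below -/
import Mathlib

section
/- Let μ ≤_cx ν in 𝒫₁(B) with B separable Banach. If (μₙ) and (νₙ) are sequences in 𝒫₁(B) with μₙ → μ and νₙ → ν in 𝒲₁, πₙ ∈ 𝓜(μₙ, νₙ) for each n, and πₙ → π̃ weakly, then π̃ ∈ 𝓜(μ, ν), i.e. π̃ is a martingale coupling of μ and ν. -/
open MeasureTheory Filter Topology BoundedContinuousFunction

lemma mc_clamp (t M : ℝ) (hM : 0 ≤ M) : |t - max (min t M) (-M)| ≤ max (|t| - M) 0 := by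
  rcases le_total t M with h1 | h1
  · rcases le_total (-M) t with h2 | h2
    · simp [min_eq_left h1, max_eq_left h2]
    · rw [min_eq_left h1, max_eq_right h2, abs_of_nonpos (by linarith : t - -M ≤ 0),
        abs_of_nonpos (by linarith : t ≤ 0)]
      exact le_trans (by linarith) (le_max_left _ _)
  · have hmm : max (min t M) (-M) = M := by
      rw [min_eq_right h1]; exact max_eq_left (by linarith)
    rw [hmm, abs_of_nonneg (by linarith : (0:ℝ) ≤ t - M), abs_of_nonneg (by linarith : (0:ℝ) ≤ t)]
    exact le_trans (by linarith) (le_max_left _ _)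

lemma mc_max {C a b R : ℝ} (hC : 0 ≤ C) :
    max (C * (a + b) - 2 * C * R) 0 ≤ C * (max (a - R) 0 + max (b - R) 0) := by
  apply max_le
  · have h1 : a - R ≤ max (a - R) 0 := le_max_left _ _
    have h2 : b - R ≤ max (b - R) 0 := le_max_left _ _
    nlinarith
  · positivity

lemma mc_fst_integral {B : Type*} [NormedAddCommGroup B]
    [MeasurableSpace B] [BorelSpace B] [SecondCountableTopology B]
    (π : Measure (B × B)) {E : Type*} [NormedAddCommGroup E] [NormedSpace ℝ E]
    (u : B → E) (hu : Continuous u) :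
    ∫ q, u q.1 ∂π = ∫ x, u x ∂π.fst := by
  rw [Measure.fst, integral_map measurable_fst.aemeasurable hu.aestronglyMeasurable]

lemma mc_snd_integral {B : Type*} [NormedAddCommGroup B]
    [MeasurableSpace B] [BorelSpace B] [SecondCountableTopology B]
    (π : Measure (B × B)) {E : Type*} [NormedAddCommGroup E] [NormedSpace ℝ E]
    (u : B → E) (hu : Continuous u) :
    ∫ q, u q.2 ∂π = ∫ x, u x ∂π.snd := by
  rw [Measure.snd, integral_map measurable_snd.aemeasurable hu.aestronglyMeasurable]

lemma mc_ext {B : Type*} [NormedAddCommGroup B]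
    [MeasurableSpace B] [BorelSpace B] [SecondCountableTopology B]
    (m₁ m₂ : Measure B) [IsFiniteMeasure m₁] [IsFiniteMeasure m₂]
    (h : ∀ f : B →ᵇ ℝ, ∫ x, f x ∂m₁ = ∫ x, f x ∂m₂) : m₁ = m₂ := by
  apply ext_of_forall_lintegral_eq_of_IsFiniteMeasure
  intro f
  set fr : B →ᵇ ℝ := ofNormedAddCommGroup (fun x => (f x : ℝ))
    (NNReal.continuous_coe.comp f.continuous) (nndist f 0 : ℝ) (fun x => by
      rw [Real.norm_of_nonneg (f x).coe_nonneg]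
      exact_mod_cast BoundedContinuousFunction.NNReal.upper_bound f x) with hfr
  have h1 := (toReal_lintegral_coe_eq_integral f m₁)
  have h2 := (toReal_lintegral_coe_eq_integral f m₂)
  have key := h fr
  simp only [hfr, coe_ofNormedAddCommGroup] at key
  rw [← h1, ← h2] at key
  exact (ENNReal.toReal_eq_toReal_iff' (lintegral_lt_top_of_nnreal m₁ f).ne
    (lintegral_lt_top_of_nnreal m₂ f).ne).mp key

theorem limit_of_martingale_couplings_is_martingale_coupling
    {B : Type*} [NormedAddCommGroup B] [NormedSpace ℝ B] [CompleteSpace B]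
    [MeasurableSpace B] [BorelSpace B] [SecondCountableTopology B]
    (μ ν : Measure B) [IsProbabilityMeasure μ] [IsProbabilityMeasure ν]
    (hμ1 : Integrable (fun x => x) μ) (hν1 : Integrable (fun x => x) ν)
    (hcx : ∀ f : B → ℝ, (∃ K, LipschitzWith K f) → ConvexOn ℝ Set.univ f →
      ∫ x, f x ∂μ ≤ ∫ x, f x ∂ν)
    (μn νn : ℕ → Measure B)
    (hμn : ∀ n, IsProbabilityMeasure (μn n)) (hνn : ∀ n, IsProbabilityMeasure (νn n))
    (hμconv : ∀ f : B → ℝ, Continuous f → (∃ C, ∀ x, |f x| ≤ C * (1 + ‖x‖)) →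
      Tendsto (fun n => ∫ x, f x ∂(μn n)) atTop (𝓝 (∫ x, f x ∂μ)))
    (hνconv : ∀ f : B → ℝ, Continuous f → (∃ C, ∀ x, |f x| ≤ C * (1 + ‖x‖)) →
      Tendsto (fun n => ∫ x, f x ∂(νn n)) atTop (𝓝 (∫ x, f x ∂ν)))
    (πn : ℕ → Measure (B × B)) (hπnprob : ∀ n, IsProbabilityMeasure (πn n))
    (hπnfst : ∀ n, (πn n).fst = μn n) (hπnsnd : ∀ n, (πn n).snd = νn n)
    (hπnmart : ∀ n, ∀ g : B →ᵇ ℝ, ∫ q : B × B, g q.1 • (q.2 - q.1) ∂(πn n) = 0)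
    (πt : Measure (B × B)) [IsProbabilityMeasure πt]
    (hπconv : ∀ f : (B × B) →ᵇ ℝ,
      Tendsto (fun n => ∫ q, f q ∂(πn n)) atTop (𝓝 (∫ q, f q ∂πt))) :
    πt.fst = μ ∧ πt.snd = ν ∧
      ∀ g : B →ᵇ ℝ, ∫ q : B × B, g q.1 • (q.2 - q.1) ∂πt = 0 := by
  have hμnorm : Integrable (fun x => ‖x‖) μ := hμ1.norm
  have hνnorm : Integrable (fun x => ‖x‖) ν := hν1.norm
  -- Part 1: first marginal
  have hfst : πt.fst = μ := by
    apply mc_ext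
    intro f
    set F : (B × B) →ᵇ ℝ := f.compContinuous ⟨Prod.fst, continuous_fst⟩ with hF
    have heq : ∀ (π : Measure (B × B)), ∫ q, F q ∂π = ∫ x, f x ∂π.fst := by
      intro π
      have := mc_fst_integral π (fun x => f x) f.continuous
      simpa [hF] using this
    have hFconv := hπconv F
    rw [heq] at hFconv
    have h1 : (fun n => ∫ q, F q ∂(πn n)) = fun n => ∫ x, f x ∂(μn n) := by
      funext n; rw [heq, hπnfst]
    rw [h1] at hFconv
    have h2 := hμconv f f.continuous ⟨‖f‖, fun x => by
      have hb := f.norm_coe_le_norm x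
      rw [Real.norm_eq_abs] at hb
      nlinarith [norm_nonneg x, norm_nonneg f]⟩
    exact tendsto_nhds_unique hFconv h2
  -- Part 2: second marginal
  have hsnd : πt.snd = ν := by
    apply mc_ext
    intro f
    set F : (B × B) →ᵇ ℝ := f.compContinuous ⟨Prod.snd, continuous_snd⟩ with hF
    have heq : ∀ (π : Measure (B × B)), ∫ q, F q ∂π = ∫ x, f x ∂π.snd := by
      intro π
      have := mc_snd_integral π (fun x => f x) f.continuous
      simpa [hF] using this
    have hFconv := hπconv F
    rw [heq] at hFconv
    have h1 : (fun n => ∫ q, F q ∂(πn n)) = fun n => ∫ x, f x ∂(νn n) := by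
      funext n; rw [heq, hπnsnd]
    rw [h1] at hFconv
    have h2 := hνconv f f.continuous ⟨‖f‖, fun x => by
      have hb := f.norm_coe_le_norm x
      rw [Real.norm_eq_abs] at hb
      nlinarith [norm_nonneg x, norm_nonneg f]⟩
    exact tendsto_nhds_unique hFconv h2
  -- eventual integrability of the identity under μn, νn
  have hint : ∀ᶠ n in atTop,
      Integrable (fun x => x) (μn n) ∧ Integrable (fun x => x) (νn n) := by
    have hf0c : Continuous (fun x : B => 1 + ‖x‖) := continuous_const.add continuous_norm
    have hf0b : ∃ C, ∀ x : B, |1 + ‖x‖| ≤ C * (1 + ‖x‖) := ⟨1, fun x => by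
      rw [abs_of_nonneg (by positivity), one_mul]⟩
    have hμpos : 0 < ∫ x, (1 + ‖x‖) ∂μ := by
      rw [integral_add (integrable_const 1) hμnorm]
      have h0 := integral_nonneg (f := fun x : B => ‖x‖) (fun x => norm_nonneg x) (μ := μ)
      simp only [integral_const, probReal_univ, ENNReal.toReal_one, smul_eq_mul, one_mul]
      linarith
    have hνpos : 0 < ∫ x, (1 + ‖x‖) ∂ν := by
      rw [integral_add (integrable_const 1) hνnorm]
      have h0 := integral_nonneg (f := fun x : B => ‖x‖) (fun x => norm_nonneg x) (μ := ν)
      simp only [integral_const, probReal_univ, ENNReal.toReal_one, smul_eq_mul, one_mul]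
      linarith
    filter_upwards [(hμconv _ hf0c hf0b).eventually (eventually_gt_nhds hμpos),
      (hνconv _ hf0c hf0b).eventually (eventually_gt_nhds hνpos)] with n h1 h2
    constructor
    · have hi : Integrable (fun x => 1 + ‖x‖) (μn n) := by
        by_contra hni
        rw [integral_undef hni] at h1
        exact lt_irrefl 0 h1
      have hnorm : Integrable (fun x => ‖x‖) (μn n) :=
        (hi.sub (integrable_const 1)).congr (Filter.Eventually.of_forall fun x => by simp)
      exact (integrable_norm_iff continuous_id.aestronglyMeasurable).mp hnorm
    · have hi : Integrable (fun x => 1 + ‖x‖) (νn n) := by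
        by_contra hni
        rw [integral_undef hni] at h2
        exact lt_irrefl 0 h2
      have hnorm : Integrable (fun x => ‖x‖) (νn n) :=
        (hi.sub (integrable_const 1)).congr (Filter.Eventually.of_forall fun x => by simp)
      exact (integrable_norm_iff continuous_id.aestronglyMeasurable).mp hnorm
  refine ⟨hfst, hsnd, fun g => ?_⟩
  -- integrability of the coordinates under πt
  have hq1 : Integrable (fun q : B × B => q.1) πt := by
    have h := hμ1
    rw [← hfst, Measure.fst] at h
    exact (integrable_map_measure continuous_id.aestronglyMeasurable
      measurable_fst.aemeasurable).mp h
  have hq2 : Integrable (fun q : B × B => q.2) πt := by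
    have h := hν1
    rw [← hsnd, Measure.snd] at h
    exact (integrable_map_measure continuous_id.aestronglyMeasurable
      measurable_snd.aemeasurable).mp h
  have hnint : Integrable (fun q : B × B => ‖q.1‖ + ‖q.2‖) πt := hq1.norm.add hq2.norm
  have hGbound : ∀ q : B × B, ‖g q.1 • (q.2 - q.1)‖ ≤ ‖g‖ * (‖q.1‖ + ‖q.2‖) := by
    intro q
    rw [norm_smul]
    have h1 := g.norm_coe_le_norm q.1
    have h2 : ‖q.2 - q.1‖ ≤ ‖q.1‖ + ‖q.2‖ := by
      calc ‖q.2 - q.1‖ ≤ ‖q.2‖ + ‖q.1‖ := norm_sub_le _ _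
      _ = ‖q.1‖ + ‖q.2‖ := by ring
    exact mul_le_mul h1 h2 (norm_nonneg _) (norm_nonneg _)
  have hGcont : Continuous (fun q : B × B => g q.1 • (q.2 - q.1)) :=
    (g.continuous.comp continuous_fst).smul (continuous_snd.sub continuous_fst)
  have hGm : Integrable (fun q : B × B => g q.1 • (q.2 - q.1)) πt := by
    apply Integrable.mono' (hnint.const_mul ‖g‖) hGcont.aestronglyMeasurable
    filter_upwards with q
    exact hGbound q
  -- reduce to scalar statement via dual
  apply NormedSpace.eq_zero_of_forall_dual_eq_zero ℝ
  intro L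
  rw [← L.integral_comp_comm hGm]
  set C : ℝ := (‖g‖ + 1) * (‖L‖ + 1) with hCdef
  have hC : 0 < C := by positivity
  set f : B × B → ℝ := fun q => g q.1 * (L q.2 - L q.1) with hfdef
  have hfeq : ∀ q : B × B, L (g q.1 • (q.2 - q.1)) = f q := fun q => by
    simp [hfdef, map_sub, _root_.map_smul, smul_eq_mul]
  have hgoal : ∫ q, L (g q.1 • (q.2 - q.1)) ∂πt = ∫ q, f q ∂πt :=
    integral_congr_ae (Filter.Eventually.of_forall hfeq)
  rw [hgoal]
  have hfcont : Continuous f := (g.continuous.comp continuous_fst).mul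
    ((L.continuous.comp continuous_snd).sub (L.continuous.comp continuous_fst))
  have hfb : ∀ q : B × B, |f q| ≤ C * (‖q.1‖ + ‖q.2‖) := by
    intro q
    have h1 : |g q.1| ≤ ‖g‖ := by
      have := g.norm_coe_le_norm q.1
      rwa [Real.norm_eq_abs] at this
    have h2 : |L q.2 - L q.1| ≤ ‖L‖ * (‖q.1‖ + ‖q.2‖) := by
      have h21 : |L q.1| ≤ ‖L‖ * ‖q.1‖ := by
        have := L.le_opNorm q.1
        rwa [Real.norm_eq_abs] at this
      have h22 : |L q.2| ≤ ‖L‖ * ‖q.2‖ := by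
        have := L.le_opNorm q.2
        rwa [Real.norm_eq_abs] at this
      calc |L q.2 - L q.1| ≤ |L q.2| + |L q.1| := abs_sub _ _
      _ ≤ ‖L‖ * (‖q.1‖ + ‖q.2‖) := by linarith
    calc |f q| = |g q.1| * |L q.2 - L q.1| := abs_mul _ _
    _ ≤ ‖g‖ * (‖L‖ * (‖q.1‖ + ‖q.2‖)) :=
        mul_le_mul h1 h2 (abs_nonneg _) (norm_nonneg _)
    _ ≤ C * (‖q.1‖ + ‖q.2‖) := by
        rw [hCdef]
        nlinarith [norm_nonneg g, norm_nonneg L, norm_nonneg q.1, norm_nonneg q.2]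
  have hfint : Integrable f πt := by
    apply Integrable.mono' (hnint.const_mul C) hfcont.aestronglyMeasurable
    filter_upwards with q
    rw [Real.norm_eq_abs]
    exact hfb q
  -- truncation functions
  set φ : ℕ → B → ℝ := fun R x => max (‖x‖ - R) 0 with hφdef
  have hφcont : ∀ R : ℕ, Continuous (φ R) := fun R =>
    (continuous_norm.sub continuous_const).max continuous_const
  have hφ0 : ∀ (R : ℕ) (x : B), 0 ≤ φ R x := fun R x => le_max_right _ _
  have hφle : ∀ (R : ℕ) (x : B), φ R x ≤ ‖x‖ := fun R x =>
    max_le (by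
      have : (0:ℝ) ≤ (R : ℝ) := Nat.cast_nonneg R
      linarith) (norm_nonneg x)
  have hφbd : ∀ R : ℕ, ∃ C', ∀ x : B, |φ R x| ≤ C' * (1 + ‖x‖) := fun R =>
    ⟨1, fun x => by
      rw [abs_of_nonneg (hφ0 R x), one_mul]
      linarith [hφle R x]⟩
  have hφμ : ∀ R : ℕ, Integrable (φ R) μ := fun R =>
    hμnorm.mono' ((hφcont R).aestronglyMeasurable) (Filter.Eventually.of_forall fun x => by
      rw [Real.norm_eq_abs, abs_of_nonneg (hφ0 R x)]; exact hφle R x)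
  have hφν : ∀ R : ℕ, Integrable (φ R) ν := fun R =>
    hνnorm.mono' ((hφcont R).aestronglyMeasurable) (Filter.Eventually.of_forall fun x => by
      rw [Real.norm_eq_abs, abs_of_nonneg (hφ0 R x)]; exact hφle R x)
  set e : ℕ → ℝ := fun R => C * ((∫ x, φ R x ∂μ) + ∫ x, φ R x ∂ν) with hedef
  -- bounded truncations of f
  have hM : ∀ R : ℕ, (0:ℝ) ≤ 2 * C * R := fun R => by positivity
  set fR : ℕ → (B × B) →ᵇ ℝ := fun R => ofNormedAddCommGroup
    (fun q => max (min (f q) (2 * C * R)) (-(2 * C * R)))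
    ((hfcont.min continuous_const).max continuous_const) (2 * C * R)
    (fun q => by
      rw [Real.norm_eq_abs, abs_le]
      constructor
      · exact le_max_right _ _
      · exact max_le (le_trans (min_le_right _ _) le_rfl)
          (by linarith [hM R])) with hfRdef
  have hfRapp : ∀ (R : ℕ) (q : B × B),
      fR R q = max (min (f q) (2 * C * R)) (-(2 * C * R)) := by
    intro R q
    simp [hfRdef, coe_ofNormedAddCommGroup]
  have hclamp : ∀ (R : ℕ) (q : B × B), |f q - fR R q| ≤ C * (φ R q.1 + φ R q.2) := by
    intro R q
    calc |f q - fR R q| ≤ max (|f q| - 2 * C * R) 0 := by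
          rw [hfRapp R q]
          exact mc_clamp (f q) (2 * C * R) (hM R)
    _ ≤ max (C * (‖q.1‖ + ‖q.2‖) - 2 * C * R) 0 :=
        max_le (le_trans (by linarith [hfb q]) (le_max_left _ _)) (le_max_right _ _)
    _ ≤ C * (max (‖q.1‖ - R) 0 + max (‖q.2‖ - R) 0) := mc_max hC.le
    _ = C * (φ R q.1 + φ R q.2) := rfl
  -- main estimate
  have claim1 : ∀ R : ℕ, |∫ q, f q ∂πt| ≤ 2 * e R := by
    intro R
    have htendb : Tendsto (fun n => C * ((∫ x, φ R x ∂(μn n)) + ∫ x, φ R x ∂(νn n)))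
        atTop (𝓝 (e R)) :=
      ((hμconv (φ R) (hφcont R) (hφbd R)).add (hνconv (φ R) (hφcont R) (hφbd R))).const_mul C
    have hbn : ∀ᶠ n in atTop, |∫ q, fR R q ∂(πn n)| ≤
        C * ((∫ x, φ R x ∂(μn n)) + ∫ x, φ R x ∂(νn n)) := by
      filter_upwards [hint] with n hn
      obtain ⟨hμi, hνi⟩ := hn
      haveI := hπnprob n
      have hq1n : Integrable (fun q : B × B => q.1) (πn n) := by
        have h := hμi
        rw [← hπnfst n, Measure.fst] at h
        exact (integrable_map_measure continuous_id.aestronglyMeasurable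
          measurable_fst.aemeasurable).mp h
      have hq2n : Integrable (fun q : B × B => q.2) (πn n) := by
        have h := hνi
        rw [← hπnsnd n, Measure.snd] at h
        exact (integrable_map_measure continuous_id.aestronglyMeasurable
          measurable_snd.aemeasurable).mp h
      have hnintn : Integrable (fun q : B × B => ‖q.1‖ + ‖q.2‖) (πn n) :=
        hq1n.norm.add hq2n.norm
      have hfintn : Integrable f (πn n) := by
        apply Integrable.mono' (hnintn.const_mul C) hfcont.aestronglyMeasurable
        filter_upwards with q
        rw [Real.norm_eq_abs]
        exact hfb q
      have hφ1n : Integrable (fun q : B × B => φ R q.1) (πn n) := by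
        apply Integrable.mono' hq1n.norm ((hφcont R).comp continuous_fst).aestronglyMeasurable
        filter_upwards with q
        simp only [Function.comp_apply]
        rw [Real.norm_eq_abs, abs_of_nonneg (hφ0 R q.1)]
        exact hφle R q.1
      have hφ2n : Integrable (fun q : B × B => φ R q.2) (πn n) := by
        apply Integrable.mono' hq2n.norm ((hφcont R).comp continuous_snd).aestronglyMeasurable
        filter_upwards with q
        simp only [Function.comp_apply]
        rw [Real.norm_eq_abs, abs_of_nonneg (hφ0 R q.2)]
        exact hφle R q.2
      have hGn : Integrable (fun q : B × B => g q.1 • (q.2 - q.1)) (πn n) := by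
        apply Integrable.mono' (hnintn.const_mul ‖g‖) hGcont.aestronglyMeasurable
        filter_upwards with q
        exact hGbound q
      have hz : ∫ q, f q ∂(πn n) = 0 := by
        have hc := L.integral_comp_comm hGn
        rw [hπnmart n g, map_zero] at hc
        rw [← integral_congr_ae (Filter.Eventually.of_forall hfeq)]
        exact hc
      have hre : |∫ q, fR R q ∂(πn n)| = |∫ q, (fR R q - f q) ∂(πn n)| := by
        rw [integral_sub ((fR R).integrable _) hfintn, hz, sub_zero]
      rw [hre]
      calc |∫ q, (fR R q - f q) ∂(πn n)| ≤ ∫ q, |fR R q - f q| ∂(πn n) := by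
            have := norm_integral_le_integral_norm (μ := πn n) (fun q => fR R q - f q)
            simpa [Real.norm_eq_abs] using this
      _ ≤ ∫ q, C * (φ R q.1 + φ R q.2) ∂(πn n) := by
            apply integral_mono (((fR R).integrable _).sub hfintn).abs
              ((hφ1n.add hφ2n).const_mul C)
            intro q
            show |(fR R) q - f q| ≤ C * (φ R q.1 + φ R q.2)
            rw [abs_sub_comm]
            exact hclamp R q
      _ = C * ((∫ x, φ R x ∂(μn n)) + ∫ x, φ R x ∂(νn n)) := by
            rw [integral_const_mul, integral_add hφ1n hφ2n,
              mc_fst_integral _ _ (hφcont R), mc_snd_integral _ _ (hφcont R),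
              hπnfst, hπnsnd]
    have h2 : |∫ q, fR R q ∂πt| ≤ e R :=
      le_of_tendsto_of_tendsto (hπconv (fR R)).abs htendb hbn
    have hφ1t : Integrable (fun q : B × B => φ R q.1) πt := by
      apply Integrable.mono' hq1.norm ((hφcont R).comp continuous_fst).aestronglyMeasurable
      filter_upwards with q
      simp only [Function.comp_apply]
      rw [Real.norm_eq_abs, abs_of_nonneg (hφ0 R q.1)]
      exact hφle R q.1
    have hφ2t : Integrable (fun q : B × B => φ R q.2) πt := by
      apply Integrable.mono' hq2.norm ((hφcont R).comp continuous_snd).aestronglyMeasurable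
      filter_upwards with q
      simp only [Function.comp_apply]
      rw [Real.norm_eq_abs, abs_of_nonneg (hφ0 R q.2)]
      exact hφle R q.2
    have h3 : |∫ q, f q ∂πt - ∫ q, fR R q ∂πt| ≤ e R := by
      rw [← integral_sub hfint ((fR R).integrable _)]
      calc |∫ q, (f q - fR R q) ∂πt| ≤ ∫ q, |f q - fR R q| ∂πt := by
            have := norm_integral_le_integral_norm (μ := πt) (fun q => f q - fR R q)
            simpa [Real.norm_eq_abs] using this
      _ ≤ ∫ q, C * (φ R q.1 + φ R q.2) ∂πt := by
            apply integral_mono (hfint.sub ((fR R).integrable _)).abs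
              ((hφ1t.add hφ2t).const_mul C)
            intro q
            show |f q - (fR R) q| ≤ C * (φ R q.1 + φ R q.2)
            exact hclamp R q
      _ = e R := by
            rw [integral_const_mul, integral_add hφ1t hφ2t,
              mc_fst_integral _ _ (hφcont R), mc_snd_integral _ _ (hφcont R),
              hfst, hsnd]
    calc |∫ q, f q ∂πt| = |(∫ q, f q ∂πt - ∫ q, fR R q ∂πt) + ∫ q, fR R q ∂πt| := by
          ring_nf
    _ ≤ |∫ q, f q ∂πt - ∫ q, fR R q ∂πt| + |∫ q, fR R q ∂πt| := abs_add_le _ _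
    _ ≤ e R + e R := add_le_add h3 h2
    _ = 2 * e R := by ring
  -- the error term tends to 0
  have hφtend : ∀ (m : Measure B), IsProbabilityMeasure m → Integrable (fun x => ‖x‖) m →
      Tendsto (fun R : ℕ => ∫ x, φ R x ∂m) atTop (𝓝 0) := by
    intro m hm hmi
    have h0 : (0:ℝ) = ∫ x, (0:ℝ) ∂m := by simp
    rw [h0]
    apply tendsto_integral_of_dominated_convergence (fun x => ‖x‖)
      (fun R => (hφcont R).aestronglyMeasurable) hmi
      (fun R => Filter.Eventually.of_forall fun x => by
        rw [Real.norm_eq_abs, abs_of_nonneg (hφ0 R x)]; exact hφle R x)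
    apply Filter.Eventually.of_forall
    intro x
    have hev : ∀ᶠ R : ℕ in atTop, φ R x = 0 := by
      filter_upwards [eventually_ge_atTop ⌈‖x‖⌉₊] with R hR
      apply max_eq_right
      have hxR : ‖x‖ ≤ (R : ℝ) := le_trans (Nat.le_ceil _) (by exact_mod_cast hR)
      linarith
    exact tendsto_const_nhds.congr' (hev.mono fun R h => h.symm)
  have hetend : Tendsto (fun R => 2 * e R) atTop (𝓝 0) := by
    have h := (((hφtend μ inferInstance hμnorm).add
      (hφtend ν inferInstance hνnorm)).const_mul C).const_mul 2
    simpa [hedef, mul_assoc] using h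
  have habs : |∫ q, f q ∂πt| ≤ 0 := ge_of_tendsto' hetend claim1
  have : |∫ q, f q ∂πt| = 0 := le_antisymm habs (abs_nonneg _)
  exact abs_eq_zero.mp this
end

section
/- Let Z, G ∈ L¹(ℙ, B). Then Z = 𝔼[G | 𝒢] for some sub-σ-algebra 𝒢 ⊆ 𝓕 if and only if f(Z) ≤ 𝔼[f(G) | 𝒢'] a.s. for some sub-σ-algebra 𝒢' and all Lipschitz convex f : B → ℝ. Moreover, in that case Z = 𝔼[G | σ(Z)] and f(Z) ≤ 𝔼[f(G) | Z] for all such f. -/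
open MeasureTheory Set

/-- Existence of a subgradient for a Lipschitz convex function. -/
lemma exists_subgradient_of_lipschitz_convex {B : Type*} [NormedAddCommGroup B]
    [NormedSpace ℝ B] {f : B → ℝ} {K : NNReal} (hL : LipschitzWith K f)
    (hC : ConvexOn ℝ Set.univ f) (x₀ : B) :
    ∃ ℓ : B →L[ℝ] ℝ, (∀ x, f x₀ + ℓ (x - x₀) ≤ f x) ∧ ∀ v, ‖ℓ v‖ ≤ K * ‖v‖ := by
  set g : B → ℝ := fun v => f (x₀ + v) - f x₀ with hg
  have g0 : g 0 = 0 := by simp [hg]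
  have gLip : ∀ v, |g v| ≤ K * ‖v‖ := by
    intro v
    have := hL.dist_le_mul (x₀ + v) x₀
    simpa [hg, Real.dist_eq, dist_eq_norm] using this
  have gconv : ∀ v w : B, ∀ a b : ℝ, 0 ≤ a → 0 ≤ b → a + b = 1 →
      g (a • v + b • w) ≤ a * g v + b * g w := by
    intro v w a b ha hb hab
    have h := hC.2 (mem_univ (x₀ + v)) (mem_univ (x₀ + w)) ha hb hab
    have hx : a • (x₀ + v) + b • (x₀ + w) = x₀ + (a • v + b • w) := by
      rw [smul_add, smul_add,
        show a • x₀ + a • v + (b • x₀ + b • w) = (a+b) • x₀ + (a • v + b • w) by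
          rw [add_smul]; abel,
        hab, one_smul]
    rw [hx] at h
    simp only [smul_eq_mul] at h
    simp only [hg]
    have e : a * f (x₀ + v) + b * f (x₀ + w) - f x₀
        = a * (f (x₀ + v) - f x₀) + b * (f (x₀ + w) - f x₀) := by
      have hb1 : b = 1 - a := by linarith
      rw [hb1]; ring
    linarith [h, e.symm.le]
  have mono : ∀ v : B, ∀ s t : ℝ, 0 < s → s ≤ t → g (s • v) / s ≤ g (t • v) / t := by
    intro v s t hs hst
    have ht : 0 < t := hs.trans_le hst
    have ha : (0:ℝ) ≤ s / t := by positivity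
    have hb : (0:ℝ) ≤ 1 - s / t := by
      have : s / t ≤ 1 := (div_le_one ht).2 hst
      linarith
    have key := gconv (t • v) 0 (s/t) (1 - s/t) ha hb (by ring)
    rw [smul_zero, add_zero, smul_smul, div_mul_cancel₀ _ ht.ne', g0, mul_zero, add_zero] at key
    rw [div_le_div_iff₀ hs ht]
    calc g (s • v) * t ≤ (s / t * g (t • v)) * t := by nlinarith
    _ = g (t • v) * s := by field_simp
  classical
  set N : B → ℝ := fun v => ⨅ t : Ioi (0:ℝ), g (t.1 • v) / t.1 with hN
  have bdd : ∀ v : B, BddBelow (Set.range fun t : Ioi (0:ℝ) => g (t.1 • v) / t.1) := by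
    intro v
    refine ⟨-(K * ‖v‖), ?_⟩
    rintro x ⟨⟨t, ht⟩, rfl⟩
    simp only [mem_Ioi] at ht
    have h1 : -(K * ‖t • v‖) ≤ g (t • v) := neg_le_of_abs_le (gLip _)
    have h2 : ‖t • v‖ = t * ‖v‖ := by
      rw [norm_smul, Real.norm_eq_abs, abs_of_pos ht]
    rw [h2] at h1
    rw [le_div_iff₀ ht]
    nlinarith
  have N_le : ∀ v : B, ∀ t : ℝ, 0 < t → N v ≤ g (t • v) / t := fun v t ht =>
    ciInf_le (bdd v) ⟨t, ht⟩
  have N_ge : ∀ v : B, -(K * ‖v‖) ≤ N v := by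
    intro v
    refine le_ciInf ?_
    rintro ⟨t, ht⟩
    simp only [mem_Ioi] at ht
    have h1 : -(K * ‖t • v‖) ≤ g (t • v) := neg_le_of_abs_le (gLip _)
    have h2 : ‖t • v‖ = t * ‖v‖ := by
      rw [norm_smul, Real.norm_eq_abs, abs_of_pos ht]
    rw [h2] at h1
    rw [le_div_iff₀ ht]
    nlinarith
  have N_le_g : ∀ v : B, N v ≤ g v := by
    intro v
    simpa using N_le v 1 one_pos
  have hle : ∀ c : ℝ, 0 < c → ∀ v, N (c • v) ≤ c * N v := by
    intro c hc v
    rw [← div_le_iff₀' hc]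
    refine le_ciInf ?_
    rintro ⟨t, ht⟩
    simp only [mem_Ioi] at ht
    show N (c • v) / c ≤ g (t • v) / t
    have h := N_le (c • v) (t / c) (by positivity)
    rw [smul_smul, div_mul_cancel₀ _ hc.ne', div_div_eq_mul_div] at h
    rw [le_div_iff₀ ht] at h
    rw [div_le_div_iff₀ hc ht]
    linarith [h]
  have N_hom : ∀ c : ℝ, 0 < c → ∀ v, N (c • v) = c * N v := by
    intro c hc v
    refine le_antisymm (hle c hc v) ?_
    have h := hle (1/c) (by positivity) (c • v)
    rw [smul_smul, one_div, inv_mul_cancel₀ hc.ne', one_smul] at h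
    calc c * N v ≤ c * (c⁻¹ * N (c • v)) := mul_le_mul_of_nonneg_left h hc.le
    _ = N (c • v) := by field_simp
  have N_add : ∀ x y : B, N (x + y) ≤ N x + N y := by
    intro x y
    refine le_of_forall_pos_le_add ?_
    intro ε hε
    have hx' : (⨅ t : Ioi (0:ℝ), g (t.1 • x) / t.1) < N x + ε / 2 := by
      have : N x < N x + ε / 2 := by linarith
      exact this
    have hy' : (⨅ t : Ioi (0:ℝ), g (t.1 • y) / t.1) < N y + ε / 2 := by
      have : N y < N y + ε / 2 := by linarith
      exact this
    obtain ⟨⟨t₁, ht₁'⟩, h₁⟩ := exists_lt_of_ciInf_lt hx'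
    obtain ⟨⟨t₂, ht₂'⟩, h₂⟩ := exists_lt_of_ciInf_lt hy'
    have h₁' : g (t₁ • x) / t₁ < N x + ε / 2 := h₁
    have h₂' : g (t₂ • y) / t₂ < N y + ε / 2 := h₂
    simp only [mem_Ioi] at ht₁' ht₂'
    set t := min t₁ t₂ / 2 with htdef
    have ht : 0 < t := by positivity
    have h2t : 0 < 2 * t := by positivity
    have h2t1 : 2 * t ≤ t₁ := by
      have := min_le_left t₁ t₂
      rw [htdef]; linarith
    have h2t2 : 2 * t ≤ t₂ := by
      have := min_le_right t₁ t₂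
      rw [htdef]; linarith
    have key : g (t • (x + y)) ≤ 1/2 * g ((2*t) • x) + 1/2 * g ((2*t) • y) := by
      have h := gconv ((2*t) • x) ((2*t) • y) (1/2) (1/2) (by norm_num) (by norm_num)
        (by norm_num)
      rw [smul_smul, smul_smul] at h
      have e : (1/2 : ℝ) * (2*t) = t := by ring
      rw [e] at h
      rw [smul_add]
      exact h
    have step1 : N (x + y) ≤ g (t • (x + y)) / t := N_le _ t ht
    have step2 : g (t • (x + y)) / t
        ≤ (1/2 * g ((2*t) • x) + 1/2 * g ((2*t) • y)) / t := by gcongr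
    have e2 : (1/2 * g ((2*t) • x) + 1/2 * g ((2*t) • y)) / t
        = g ((2*t) • x) / (2*t) + g ((2*t) • y) / (2*t) := by
      field_simp
    have step3 : g ((2*t) • x) / (2*t) ≤ g (t₁ • x) / t₁ := mono x (2*t) t₁ h2t h2t1
    have step4 : g ((2*t) • y) / (2*t) ≤ g (t₂ • y) / t₂ := mono y (2*t) t₂ h2t h2t2
    rw [e2] at step2
    linarith
  have hN0 : N 0 = 0 := le_antisymm (by simpa [g0] using N_le_g 0) (by simpa using N_ge 0)
  obtain ⟨ℓ₀, -, hℓ₀⟩ := exists_extension_of_le_sublinear ⟨⊥, 0⟩ N N_hom N_add (fun x => by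
    have hx : (x : B) = 0 := (Submodule.mem_bot ℝ).1 x.2
    simp [hx, hN0])
  have hb : ∀ v, ‖ℓ₀ v‖ ≤ K * ‖v‖ := by
    intro v
    rw [Real.norm_eq_abs, abs_le]
    constructor
    · have h := (hℓ₀ (-v)).trans ((N_le_g _).trans (le_of_abs_le (gLip _)))
      rw [map_neg, norm_neg] at h
      linarith
    · exact (hℓ₀ v).trans ((N_le_g v).trans (le_of_abs_le (gLip v)))
  refine ⟨LinearMap.mkContinuous ℓ₀ K (fun v => hb v), ?_, fun v => by simpa using hb v⟩
  intro x
  have h := (hℓ₀ (x - x₀)).trans (N_le_g _)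
  have hgx : g (x - x₀) = f x - f x₀ := by simp [hg]
  simp only [LinearMap.mkContinuous_apply]
  linarith

open MeasureTheory Set

lemma condexp_clm_comm {Ω : Type*} {m m0 : MeasurableSpace Ω} {μ : Measure Ω}
    (hm : m ≤ m0) [IsFiniteMeasure μ]
    {B : Type*} [NormedAddCommGroup B] [NormedSpace ℝ B] [CompleteSpace B]
    (T : B →L[ℝ] ℝ) {G : Ω → B} (hGi : Integrable G μ) :
    μ[fun ω => T (G ω)|m] =ᵐ[μ] fun ω => T ((μ[G|m]) ω) := by
  refine (ae_eq_condExp_of_forall_setIntegral_eq hm (T.integrable_comp hGi)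
    (fun s _ _ => (T.integrable_comp integrable_condExp).integrableOn)
    (fun s hs _ => ?_)
    (T.continuous.comp_aestronglyMeasurable
      stronglyMeasurable_condExp.aestronglyMeasurable)).symm
  rw [T.integral_comp_comm integrable_condExp.integrableOn,
    setIntegral_condExp hm hGi hs,
    ← T.integral_comp_comm hGi.integrableOn]

lemma lipschitz_comp_integrable {Ω : Type*} {m0 : MeasurableSpace Ω} {μ : Measure Ω}
    [IsFiniteMeasure μ] {B : Type*} [NormedAddCommGroup B] [NormedSpace ℝ B]
    [MeasurableSpace B] [BorelSpace B]
    {f : B → ℝ} {K : NNReal} (hL : LipschitzWith K f) {G : Ω → B} (hGm : Measurable G)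
    (hGi : Integrable G μ) : Integrable (fun ω => f (G ω)) μ := by
  refine Integrable.mono' ((integrable_const |f 0|).add (hGi.norm.const_mul K))
    (hL.continuous.measurable.comp hGm).aestronglyMeasurable
    (Filter.Eventually.of_forall fun ω => ?_)
  have h := hL.dist_le_mul (G ω) 0
  rw [Real.dist_eq, dist_zero_right] at h
  rw [Real.norm_eq_abs]
  have := abs_sub_abs_le_abs_sub (f (G ω)) (f 0)
  simp only [Pi.add_apply]
  linarith [abs_sub_abs_le_abs_sub (f (G ω)) (f 0), h, abs_nonneg (f 0)]

lemma condexp_jensen {B : Type*} [NormedAddCommGroup B] [NormedSpace ℝ B] [CompleteSpace B]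
    [MeasurableSpace B] [BorelSpace B] [SecondCountableTopology B]
    {Ω : Type*} {𝒢 m0 : MeasurableSpace Ω} (hm : 𝒢 ≤ m0) (ℙ : Measure Ω)
    [IsProbabilityMeasure ℙ] {Z G : Ω → B} (hGm : Measurable G) (hGi : Integrable G ℙ)
    (hZG : Z =ᵐ[ℙ] ℙ[G|𝒢]) {f : B → ℝ} {K : NNReal} (hL : LipschitzWith K f)
    (hC : ConvexOn ℝ Set.univ f) :
    (fun ω => f (Z ω)) ≤ᵐ[ℙ] ℙ[fun ω => f (G ω)|𝒢] := by
  have hfGi : Integrable (fun ω => f (G ω)) ℙ := lipschitz_comp_integrable hL hGm hGi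
  haveI : Nonempty B := ⟨0⟩
  obtain ⟨d, hd⟩ := TopologicalSpace.exists_dense_seq B
  choose ℓ hℓ hℓb using fun n => exists_subgradient_of_lipschitz_convex hL hC (d n)
  have key : ∀ n : ℕ, ∀ᵐ ω ∂ℙ, f (d n) + (ℓ n) (Z ω - d n) ≤ (ℙ[fun ω => f (G ω)|𝒢]) ω := by
    intro n
    have e1 : ℙ[fun ω => (ℓ n) (G ω)|𝒢] =ᵐ[ℙ] fun ω => (ℓ n) ((ℙ[G|𝒢]) ω) :=
      condexp_clm_comm hm (ℓ n) hGi
    have hint : Integrable (fun ω => (ℓ n) (G ω)) ℙ := (ℓ n).integrable_comp hGi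
    have e2 : ℙ[fun ω => f (d n) + (ℓ n) (G ω - d n)|𝒢]
        =ᵐ[ℙ] fun ω => f (d n) + (ℓ n) ((ℙ[G|𝒢]) ω - d n) := by
      have eq1 : (fun ω => f (d n) + (ℓ n) (G ω - d n))
          = (fun ω => (f (d n) - (ℓ n) (d n)) + (ℓ n) (G ω)) := by
        funext ω; rw [map_sub]; ring
      rw [eq1]
      calc ℙ[fun ω => (f (d n) - (ℓ n) (d n)) + (ℓ n) (G ω)|𝒢]
          =ᵐ[ℙ] ℙ[fun _ => (f (d n) - (ℓ n) (d n))|𝒢] + ℙ[fun ω => (ℓ n) (G ω)|𝒢] :=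
            condExp_add (integrable_const _) hint 𝒢
        _ =ᵐ[ℙ] (fun _ => f (d n) - (ℓ n) (d n)) + fun ω => (ℓ n) ((ℙ[G|𝒢]) ω) := by
            rw [condExp_const hm]
            exact Filter.EventuallyEq.add Filter.EventuallyEq.rfl e1
        _ = fun ω => f (d n) + (ℓ n) ((ℙ[G|𝒢]) ω - d n) := by
            funext ω
            simp only [Pi.add_apply]
            rw [map_sub]
            ring
    have hφi : Integrable (fun ω => f (d n) + (ℓ n) (G ω - d n)) ℙ := by
      have eq1 : (fun ω => f (d n) + (ℓ n) (G ω - d n))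
          = (fun ω => (f (d n) - (ℓ n) (d n)) + (ℓ n) (G ω)) := by
        funext ω; rw [map_sub]; ring
      rw [eq1]
      exact (integrable_const _).add hint
    have hmono : ℙ[fun ω => f (d n) + (ℓ n) (G ω - d n)|𝒢] ≤ᵐ[ℙ] ℙ[fun ω => f (G ω)|𝒢] :=
      condExp_mono hφi hfGi (Filter.Eventually.of_forall fun ω => hℓ n (G ω))
    filter_upwards [hZG, e2, hmono] with ω h1 h2 h3
    rw [h1, ← h2]
    exact h3
  have keyall : ∀ᵐ ω ∂ℙ, ∀ n, f (d n) + (ℓ n) (Z ω - d n) ≤ (ℙ[fun ω => f (G ω)|𝒢]) ω :=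
    ae_all_iff.mpr key
  filter_upwards [keyall] with ω hω
  show f (Z ω) ≤ (ℙ[fun ω => f (G ω)|𝒢]) ω
  refine le_of_forall_pos_le_add fun ε hε => ?_
  have hδ : 0 < ε / (2 * (K : ℝ) + 1) := by positivity
  obtain ⟨n, hn⟩ := hd.exists_dist_lt (Z ω) hδ
  rw [dist_eq_norm] at hn
  have l1 : f (Z ω) - f (d n) ≤ (K : ℝ) * ‖Z ω - d n‖ := by
    have h := hL.dist_le_mul (Z ω) (d n)
    rw [Real.dist_eq, dist_eq_norm] at h
    linarith [le_of_abs_le h, abs_nonneg (f (Z ω) - f (d n))]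
  have l2 : -((K : ℝ) * ‖Z ω - d n‖) ≤ (ℓ n) (Z ω - d n) := by
    have h := hℓb n (Z ω - d n)
    rw [Real.norm_eq_abs] at h
    linarith [neg_le_of_abs_le h]
  have l3 := hω n
  have l4 : (K : ℝ) * ‖Z ω - d n‖ ≤ (K : ℝ) * (ε / (2 * (K : ℝ) + 1)) := by
    have : (0:ℝ) ≤ (K : ℝ) := K.coe_nonneg
    nlinarith
  have l5 : 2 * ((K : ℝ) * (ε / (2 * (K : ℝ) + 1))) ≤ ε := by
    have h0 : (0:ℝ) ≤ (K : ℝ) := K.coe_nonneg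
    have hpos : (0:ℝ) < 2 * (K : ℝ) + 1 := by positivity
    rw [show 2 * ((K : ℝ) * (ε / (2 * (K : ℝ) + 1))) = (2 * (K:ℝ) * ε) / (2 * (K:ℝ) + 1) by
      field_simp]
    rw [div_le_iff₀ hpos]
    nlinarith
  linarith

lemma condexp_tower_comap {B : Type*} [NormedAddCommGroup B] [NormedSpace ℝ B] [CompleteSpace B]
    [MeasurableSpace B] [BorelSpace B] [SecondCountableTopology B]
    {Ω : Type*} {𝒢 m0 : MeasurableSpace Ω} (h𝒢 : 𝒢 ≤ m0) (ℙ : Measure Ω)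
    [IsProbabilityMeasure ℙ]
    {Z G : Ω → B} (hZm : Measurable Z) (hZi : Integrable Z ℙ) (hGi : Integrable G ℙ)
    (hZG : Z =ᵐ[ℙ] ℙ[G|𝒢]) :
    Z =ᵐ[ℙ] ℙ[G|MeasurableSpace.comap Z inferInstance] := by
  have hmZ : MeasurableSpace.comap Z inferInstance ≤ m0 := hZm.comap_le
  set Y := ℙ[G|𝒢] with hY
  have hYsm : StronglyMeasurable[𝒢] Y := stronglyMeasurable_condExp
  have hYmeas : Measurable[𝒢] Y := hYsm.measurable
  refine ae_eq_condExp_of_forall_setIntegral_eq hmZ hGi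
    (fun s _ _ => hZi.integrableOn) (fun s hs _ => ?_) ?_
  · obtain ⟨A, hA, rfl⟩ := hs
    have hset : Z ⁻¹' A =ᵐ[ℙ] Y ⁻¹' A := by
      filter_upwards [hZG] with ω h
      show (Z ω ∈ A) = (Y ω ∈ A)
      rw [h]
    calc ∫ ω in Z ⁻¹' A, Z ω ∂ℙ
        = ∫ ω in Z ⁻¹' A, Y ω ∂ℙ := by
          refine setIntegral_congr_ae (hZm hA) ?_
          filter_upwards [hZG] with ω h _
          exact h
      _ = ∫ ω in Y ⁻¹' A, Y ω ∂ℙ := setIntegral_congr_set hset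
      _ = ∫ ω in Y ⁻¹' A, G ω ∂ℙ := setIntegral_condExp h𝒢 hGi (hYmeas hA)
      _ = ∫ ω in Z ⁻¹' A, G ω ∂ℙ := setIntegral_congr_set hset.symm
  · have hZmZ : Measurable[MeasurableSpace.comap Z inferInstance] Z :=
      Measurable.of_comap_le le_rfl
    exact hZmZ.stronglyMeasurable.aestronglyMeasurable

lemma clm_convexOn {B : Type*} [NormedAddCommGroup B] [NormedSpace ℝ B] (ℓ : B →L[ℝ] ℝ) :
    ConvexOn ℝ Set.univ fun x => ℓ x := by
  refine ⟨convex_univ, fun x _ y _ a b _ _ _ => ?_⟩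
  simp [ℓ.map_add, ℓ.map_smul, smul_eq_mul]

theorem condexp_iff_convex_order
    {B : Type*} [NormedAddCommGroup B] [NormedSpace ℝ B] [CompleteSpace B]
    [MeasurableSpace B] [BorelSpace B] [SecondCountableTopology B]
    {Ω : Type*} [m0 : MeasurableSpace Ω] (ℙ : Measure Ω) [IsProbabilityMeasure ℙ]
    (Z G : Ω → B) (hZm : Measurable Z) (hGm : Measurable G)
    (hZi : Integrable Z ℙ) (hGi : Integrable G ℙ) :
    ((∃ 𝒢 : MeasurableSpace Ω, 𝒢 ≤ m0 ∧ Z =ᵐ[ℙ] ℙ[G | 𝒢]) ↔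
      (∃ 𝒢' : MeasurableSpace Ω, 𝒢' ≤ m0 ∧
        ∀ f : B → ℝ, (∃ K, LipschitzWith K f) → ConvexOn ℝ Set.univ f →
          (fun ω => f (Z ω)) ≤ᵐ[ℙ] ℙ[fun ω => f (G ω) | 𝒢'])) ∧
    ((∃ 𝒢 : MeasurableSpace Ω, 𝒢 ≤ m0 ∧ Z =ᵐ[ℙ] ℙ[G | 𝒢]) →
      (Z =ᵐ[ℙ] ℙ[G | MeasurableSpace.comap Z inferInstance] ∧
        ∀ f : B → ℝ, (∃ K, LipschitzWith K f) → ConvexOn ℝ Set.univ f →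
          (fun ω => f (Z ω)) ≤ᵐ[ℙ] ℙ[fun ω => f (G ω) |
            MeasurableSpace.comap Z inferInstance])) := by
  have hmZ : MeasurableSpace.comap Z inferInstance ≤ m0 := hZm.comap_le
  constructor
  · constructor
    · rintro ⟨𝒢, h𝒢, hZG⟩
      exact ⟨𝒢, h𝒢, fun f ⟨K, hK⟩ hC => condexp_jensen h𝒢 ℙ hGm hGi hZG hK hC⟩
    · rintro ⟨𝒢', h𝒢', hconv⟩
      refine ⟨𝒢', h𝒢', ?_⟩
      have hdual : ∀ ℓ : B →L[ℝ] ℝ, (fun ω => ℓ (Z ω - (ℙ[G|𝒢']) ω)) =ᵐ[ℙ] 0 := by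
        intro ℓ
        have h1 := hconv (fun x => ℓ x) ⟨‖ℓ‖₊, ℓ.lipschitz⟩ (clm_convexOn ℓ)
        have h2 := hconv (fun x => (-ℓ) x) ⟨‖(-ℓ)‖₊, (-ℓ).lipschitz⟩ (clm_convexOn (-ℓ))
        have e1 : ℙ[fun ω => ℓ (G ω)|𝒢'] =ᵐ[ℙ] fun ω => ℓ ((ℙ[G|𝒢']) ω) :=
          condexp_clm_comm h𝒢' ℓ hGi
        have e2 : ℙ[fun ω => (-ℓ) (G ω)|𝒢'] =ᵐ[ℙ] fun ω => (-ℓ) ((ℙ[G|𝒢']) ω) :=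
          condexp_clm_comm h𝒢' (-ℓ) hGi
        filter_upwards [h1, h2, e1, e2] with ω hh1 hh2 he1 he2
        simp only [ContinuousLinearMap.neg_apply] at hh2 he2
        rw [he1] at hh1
        rw [he2] at hh2
        show ℓ (Z ω - (ℙ[G|𝒢']) ω) = 0
        rw [map_sub]
        linarith
      have hzero := ae_eq_zero_of_forall_dual ℝ
        (f := fun ω => Z ω - (ℙ[G|𝒢']) ω) (μ := ℙ) hdual
      filter_upwards [hzero] with ω h
      exact sub_eq_zero.1 h
  · rintro ⟨𝒢, h𝒢, hZG⟩
    have hZσ := condexp_tower_comap h𝒢 ℙ hZm hZi hGi hZG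
    exact ⟨hZσ, fun f ⟨K, hK⟩ hC => condexp_jensen hmZ ℙ hGm hGi hZσ hK hC⟩
end
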